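/- Failure of a uniform modulus of Riemann integrability for the family exp(1/(x²+a)): For each a ∈ (0,1] the function f_a : ℝ → ℝ, f_a(x) := Real.exp (1/(x² + a)), restricted to [0,1], is continuous, hence for each a and each k ≥ 1 there exists N such that any two tagged partitions of [0,1] with mesh < 1/N have Riemann sums of f_a within 1/k of each other. Nevertheless, there is no single function N : ℕ → ℕ with N k ≥ 1 for all k ≥ 1 such that for all a ∈ (0,1] and all k ≥ 1, any two tagged partitions π, ρ of [0,1] with mesh less than 1/(N k) satisfy |S_π(f_a) − S_ρ(f_a)| < 1/k. -/

import Mathlib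

/-- A tagged partition of `[0,1]`: points `0 = p 0 < p 1 < ⋯ < p M = 1` together
with tags `t i ∈ [p i, p (i+1)]` for `i < M`. -/
structure TaggedPartitionUnit where
  M : ℕ
  p : ℕ → ℝ
  t : ℕ → ℝ
  M_pos : 0 < M
  first : p 0 = 0
  last : p M = 1
  mono : ∀ i < M, p i < p (i + 1)
  tag_mem : ∀ i < M, t i ∈ Set.Icc (p i) (p (i + 1))

/-- The mesh of a tagged partition: the largest distance between adjacent points. -/
noncomputable def TaggedPartitionUnit.mesh (π : TaggedPartitionUnit) : ℝ :=
  (Finset.range π.M).sup' (Finset.nonempty_range_iff.mpr π.M_pos.ne')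
    (fun i => π.p (i + 1) - π.p i)

/-- The Riemann sum of `f` over a tagged partition. -/
noncomputable def TaggedPartitionUnit.riemannSum (π : TaggedPartitionUnit) (f : ℝ → ℝ) : ℝ :=
  ∑ i ∈ Finset.range π.M, f (π.t i) * (π.p (i + 1) - π.p i)

namespace TaggedPartitionUnit

lemma p_le_p (π : TaggedPartitionUnit) {i j : ℕ} (hij : i ≤ j) (hj : j ≤ π.M) :
    π.p i ≤ π.p j := by
  induction j with
  | zero =>
    have : i = 0 := Nat.le_zero.mp hij
    simp [this]
  | succ j ih =>
    rcases Nat.lt_or_ge i (j + 1) with h | h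
    · exact (ih (Nat.lt_succ_iff.mp h) ((Nat.le_succ j).trans hj)).trans
        (π.mono j (by omega)).le
    · have : i = j + 1 := le_antisymm hij h
      simp [this]

lemma p_mem (π : TaggedPartitionUnit) {i : ℕ} (hi : i ≤ π.M) :
    π.p i ∈ Set.Icc (0 : ℝ) 1 := by
  constructor
  · rw [← π.first]; exact π.p_le_p (Nat.zero_le i) hi
  · rw [← π.last]; exact π.p_le_p hi le_rfl

lemma diff_le_mesh (π : TaggedPartitionUnit) {i : ℕ} (hi : i < π.M) :
    π.p (i + 1) - π.p i ≤ π.mesh := by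
  have := Finset.le_sup' (fun j => π.p (j + 1) - π.p j) (Finset.mem_range.mpr hi)
  simpa only [TaggedPartitionUnit.mesh] using this

lemma riemannSum_sub_integral {f : ℝ → ℝ} (hf : ContinuousOn f (Set.Icc 0 1))
    {ε δ : ℝ} (hδpos : 0 < δ)
    (hδ : ∀ x ∈ Set.Icc (0:ℝ) 1, ∀ y ∈ Set.Icc (0:ℝ) 1, |x - y| ≤ δ → |f x - f y| ≤ ε)
    (π : TaggedPartitionUnit) (hm : π.mesh ≤ δ) :
    |π.riemannSum f - ∫ x in (0:ℝ)..1, f x| ≤ ε := by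
  have hεnn : 0 ≤ ε := by
    have := hδ 0 (by norm_num) 0 (by norm_num) (by simp [hδpos.le])
    simpa using (abs_nonneg _).trans this
  have hint : ∀ i < π.M, IntervalIntegrable f MeasureTheory.volume (π.p i) (π.p (i+1)) := by
    intro i hi
    apply (hf.mono _).intervalIntegrable
    rw [Set.uIcc_of_le (π.mono i hi).le]
    exact Set.Icc_subset_Icc (π.p_mem hi.le).1 (π.p_mem hi).2
  have hsplit : ∫ x in (0:ℝ)..1, f x
      = ∑ i ∈ Finset.range π.M, ∫ x in (π.p i)..(π.p (i+1)), f x := by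
    rw [intervalIntegral.sum_integral_adjacent_intervals hint, π.first, π.last]
  rw [hsplit, TaggedPartitionUnit.riemannSum, ← Finset.sum_sub_distrib]
  have hterm : ∀ i ∈ Finset.range π.M,
      |f (π.t i) * (π.p (i+1) - π.p i) - ∫ x in (π.p i)..(π.p (i+1)), f x|
        ≤ ε * (π.p (i+1) - π.p i) := by
    intro i hi
    rw [Finset.mem_range] at hi
    have hsub : Set.Icc (π.p i) (π.p (i+1)) ⊆ Set.Icc (0:ℝ) 1 :=
      Set.Icc_subset_Icc (π.p_mem hi.le).1 (π.p_mem hi).2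
    have hti := π.tag_mem i hi
    have heq : f (π.t i) * (π.p (i+1) - π.p i) - ∫ x in (π.p i)..(π.p (i+1)), f x
        = ∫ x in (π.p i)..(π.p (i+1)), (f (π.t i) - f x) := by
      rw [intervalIntegral.integral_sub (intervalIntegrable_const) (hint i hi),
        intervalIntegral.integral_const]
      ring_nf
    rw [heq]
    have hle := π.mono i hi
    have : ‖∫ x in (π.p i)..(π.p (i+1)), (f (π.t i) - f x)‖
        ≤ ε * |π.p (i+1) - π.p i| := by
      apply intervalIntegral.norm_integral_le_of_norm_le_const
      intro x hx
      rw [Set.uIoc_of_le hle.le] at hx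
      have hxIcc : x ∈ Set.Icc (π.p i) (π.p (i+1)) := Set.Ioc_subset_Icc_self hx
      have hdist : |π.t i - x| ≤ δ := by
        have h1 : |π.t i - x| ≤ π.p (i+1) - π.p i := by
          rw [abs_sub_le_iff]
          constructor <;> [skip; skip] <;>
            · obtain ⟨h1, h2⟩ := hti; obtain ⟨h3, h4⟩ := hxIcc; linarith
        exact h1.trans ((π.diff_le_mesh hi).trans hm)
      exact hδ (π.t i) (hsub hti) x (hsub hxIcc) hdist
    rw [Real.norm_eq_abs] at this
    rwa [abs_of_pos (sub_pos.mpr hle)] at this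
  calc |∑ i ∈ Finset.range π.M,
      (f (π.t i) * (π.p (i+1) - π.p i) - ∫ x in (π.p i)..(π.p (i+1)), f x)|
      ≤ ∑ i ∈ Finset.range π.M,
        |f (π.t i) * (π.p (i+1) - π.p i) - ∫ x in (π.p i)..(π.p (i+1)), f x| :=
        Finset.abs_sum_le_sum_abs _ _
    _ ≤ ∑ i ∈ Finset.range π.M, ε * (π.p (i+1) - π.p i) := Finset.sum_le_sum hterm
    _ = ε * ∑ i ∈ Finset.range π.M, (π.p (i+1) - π.p i) := by rw [Finset.mul_sum]
    _ = ε := by rw [Finset.sum_range_sub, π.first, π.last]; ring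

end TaggedPartitionUnit

/-- Failure of a uniform modulus of Riemann integrability for the family
`f_a x = exp (1/(x² + a))`, `a ∈ (0,1]`: each `f_a` is continuous on `[0,1]`,
hence for each `a` and `k ≥ 1` there is `N` such that any two tagged partitions
of mesh `< 1/N` have Riemann sums within `1/k`; yet no single `N : ℕ → ℕ` works
uniformly in the parameter `a`. -/
theorem no_uniform_modulus_of_Riemann_integrability :
    (∀ a ∈ Set.Ioc (0 : ℝ) 1,
      ContinuousOn (fun x : ℝ => Real.exp (1 / (x ^ 2 + a))) (Set.Icc 0 1)) ∧
    (∀ a ∈ Set.Ioc (0 : ℝ) 1, ∀ k : ℕ, 1 ≤ k → ∃ N : ℕ, 1 ≤ N ∧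
      ∀ π ρ : TaggedPartitionUnit, π.mesh < 1 / (N : ℝ) → ρ.mesh < 1 / (N : ℝ) →
        |π.riemannSum (fun x : ℝ => Real.exp (1 / (x ^ 2 + a))) -
          ρ.riemannSum (fun x : ℝ => Real.exp (1 / (x ^ 2 + a)))| < 1 / (k : ℝ)) ∧
    (¬ ∃ N : ℕ → ℕ, (∀ k : ℕ, 1 ≤ k → 1 ≤ N k) ∧
      ∀ a ∈ Set.Ioc (0 : ℝ) 1, ∀ k : ℕ, 1 ≤ k →
        ∀ π ρ : TaggedPartitionUnit,
          π.mesh < 1 / (N k : ℝ) → ρ.mesh < 1 / (N k : ℝ) →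
          |π.riemannSum (fun x : ℝ => Real.exp (1 / (x ^ 2 + a))) -
            ρ.riemannSum (fun x : ℝ => Real.exp (1 / (x ^ 2 + a)))| < 1 / (k : ℝ)) := by
  have hcont : ∀ a ∈ Set.Ioc (0 : ℝ) 1,
      ContinuousOn (fun x : ℝ => Real.exp (1 / (x ^ 2 + a))) (Set.Icc 0 1) := by
    intro a ha
    apply Continuous.continuousOn
    apply Real.continuous_exp.comp
    apply Continuous.div continuous_const (by continuity)
    intro x
    have : (0:ℝ) < x ^ 2 + a := by nlinarith [sq_nonneg x, ha.1]
    exact this.ne'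
  refine ⟨hcont, ?_, ?_⟩
  · intro a ha k hk
    set f := fun x : ℝ => Real.exp (1 / (x ^ 2 + a)) with hfdef
    have hf := hcont a ha
    have hkpos : (0:ℝ) < k := by exact_mod_cast hk
    have hε : (0:ℝ) < 1 / (3 * k) := by positivity
    have huc := (isCompact_Icc.uniformContinuousOn_of_continuous hf)
    obtain ⟨δ, hδpos, hδ⟩ := Metric.uniformContinuousOn_iff.mp huc (1 / (3 * k)) hε
    have hδ' : ∀ x ∈ Set.Icc (0:ℝ) 1, ∀ y ∈ Set.Icc (0:ℝ) 1,
        |x - y| ≤ δ / 2 → |f x - f y| ≤ 1 / (3 * k) := by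
      intro x hx y hy hxy
      have := hδ x hx y hy (by rw [Real.dist_eq]; linarith)
      rw [Real.dist_eq] at this
      exact this.le
    obtain ⟨n, hn⟩ := exists_nat_one_div_lt (show (0:ℝ) < δ / 2 by linarith)
    refine ⟨n + 1, by omega, ?_⟩
    intro π ρ hπ hρ
    have hcast : ((n + 1 : ℕ) : ℝ) = (n : ℝ) + 1 := by push_cast; ring
    have hπm : π.mesh ≤ δ / 2 := by rw [hcast] at hπ; linarith
    have hρm : ρ.mesh ≤ δ / 2 := by rw [hcast] at hρ; linarith
    have h1 := TaggedPartitionUnit.riemannSum_sub_integral hf (by linarith) hδ' π hπm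
    have h2 := TaggedPartitionUnit.riemannSum_sub_integral hf (by linarith) hδ' ρ hρm
    have h3 : 2 * (1 / (3 * (k:ℝ))) < 1 / k := by
      rw [show 2 * (1 / (3 * (k:ℝ))) = 2 / (3 * k) by ring,
        div_lt_div_iff₀ (by positivity) hkpos]
      linarith
    have habs := abs_sub_abs_le_abs_sub (π.riemannSum f) (ρ.riemannSum f)
    calc |π.riemannSum f - ρ.riemannSum f|
        ≤ |π.riemannSum f - ∫ x in (0:ℝ)..1, f x|
          + |ρ.riemannSum f - ∫ x in (0:ℝ)..1, f x| := by
          have := abs_sub_le (π.riemannSum f) (∫ x in (0:ℝ)..1, f x) (ρ.riemannSum f)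
          rwa [abs_sub_comm (∫ x in (0:ℝ)..1, f x) (ρ.riemannSum f)] at this
      _ ≤ 1 / (3 * k) + 1 / (3 * k) := add_le_add h1 h2
      _ < 1 / k := by linarith
  · rintro ⟨N, hN1, hN⟩
    set n := N 1 with hndef
    have hn1 : 1 ≤ n := hN1 1 le_rfl
    set m : ℕ := n + 1 with hmdef
    have hmpos : (0:ℝ) < m := by positivity
    have hnpos : (0:ℝ) < n := by exact_mod_cast hn1
    have hm1 : (1:ℝ) ≤ m := by exact_mod_cast Nat.one_le_iff_ne_zero.mpr (by omega)
    set q : ℕ → ℝ := fun i => (i : ℝ) / m with hqdef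
    have hqmono : ∀ i, q i < q (i + 1) := by
      intro i
      show (i:ℝ)/m < ((i+1:ℕ):ℝ)/m
      have h : ((i:ℝ)) < ((i+1:ℕ):ℝ) := by exact_mod_cast Nat.lt_succ_self i
      exact (div_lt_div_iff_of_pos_right hmpos).mpr h
    have hq0 : q 0 = 0 := by simp [hqdef]
    have hqm : q m = 1 := by
      show (m:ℝ)/m = 1
      exact div_self hmpos.ne'
    -- the parameter a
    set C : ℝ := (m:ℝ) + Real.exp ((m:ℝ)^2) with hCdef
    have hCpos : (0:ℝ) < C + 1 := by positivity
    have hexpm : Real.exp 1 ≤ Real.exp ((m:ℝ)^2) :=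
      Real.exp_le_exp.mpr (by nlinarith)
    have hlog : 1 < Real.log (C + 1) := by
      rw [Real.lt_log_iff_exp_lt hCpos]
      nlinarith
    set a : ℝ := 1 / Real.log (C + 1) with hadef
    have hapos : 0 < a := by
      apply div_pos one_pos; linarith
    have ha : a ∈ Set.Ioc (0:ℝ) 1 := by
      refine ⟨hapos, ?_⟩
      rw [hadef, div_le_one (by linarith)]
      linarith
    have hainv : 1 / a = Real.log (C + 1) := by
      rw [hadef, one_div_one_div]
    have hexpa : Real.exp (1 / a) = C + 1 := by
      rw [hainv, Real.exp_log hCpos]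
    set f : ℝ → ℝ := fun x => Real.exp (1 / (x ^ 2 + a)) with hfdef
    -- the two partitions
    set π : TaggedPartitionUnit :=
      { M := m, p := q, t := q
        M_pos := Nat.succ_pos n
        first := hq0, last := hqm
        mono := fun i _ => hqmono i
        tag_mem := fun i _ => ⟨le_rfl, (hqmono i).le⟩ } with hπdef
    set ρ : TaggedPartitionUnit :=
      { M := m, p := q, t := fun i => if i = 0 then q 1 else q i
        M_pos := Nat.succ_pos n
        first := hq0, last := hqm
        mono := fun i _ => hqmono i
        tag_mem := by
          intro i hi
          by_cases h0 : i = 0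
          · subst h0; simp only [if_pos rfl]
            exact ⟨(hqmono 0).le, le_rfl⟩
          · simp only [if_neg h0]
            exact ⟨le_rfl, (hqmono i).le⟩ } with hρdef
    -- mesh bound
    have hdiffq : ∀ i, q (i + 1) - q i = 1 / (m:ℝ) := by
      intro i
      show ((i+1:ℕ):ℝ)/m - (i:ℝ)/m = 1/(m:ℝ)
      push_cast
      field_simp
      ring
    have hmesh : ∀ σ : TaggedPartitionUnit, σ.M = m → σ.p = q →
        σ.mesh < 1 / (n:ℝ) := by
      intro σ hM hp
      rw [TaggedPartitionUnit.mesh]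
      rw [Finset.sup'_lt_iff]
      intro i _
      rw [hp, hdiffq]
      apply one_div_lt_one_div_of_lt hnpos
      rw [hmdef]; push_cast; linarith
    have hπmesh : π.mesh < 1 / (N 1 : ℝ) := by
      rw [← hndef]; exact hmesh π rfl rfl
    have hρmesh : ρ.mesh < 1 / (N 1 : ℝ) := by
      rw [← hndef]; exact hmesh ρ rfl rfl
    have hcontra := hN a ha 1 le_rfl π ρ hπmesh hρmesh
    -- compute the Riemann sum difference
    have hsum : π.riemannSum f - ρ.riemannSum f = (f (q 0) - f (q 1)) * (q 1 - q 0) := by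
      rw [TaggedPartitionUnit.riemannSum, TaggedPartitionUnit.riemannSum,
        ← Finset.sum_sub_distrib]
      rw [Finset.sum_eq_single_of_mem 0 (Finset.mem_range.mpr (Nat.succ_pos n))]
      · show f (q 0) * (q (0+1) - q 0) - f (if (0:ℕ) = 0 then q 1 else q 0) * (q (0+1) - q 0) = _
        rw [if_pos rfl]
        ring
      · intro i _ hi0
        show f (q i) * (q (i+1) - q i) - f (if i = 0 then q 1 else q i) * (q (i+1) - q i) = 0
        simp [if_neg hi0]
    -- lower bound on the difference
    have hfq0 : f (q 0) = C + 1 := by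
      rw [hq0, hfdef]
      show Real.exp (1 / ((0:ℝ)^2 + a)) = C + 1
      rw [show ((0:ℝ)^2 + a) = a by ring, hexpa]
    have hq1 : q 1 = 1 / (m:ℝ) := by
      show ((1:ℕ):ℝ)/m = 1/(m:ℝ); norm_num
    have hfq1 : f (q 1) ≤ Real.exp ((m:ℝ)^2) := by
      rw [hfdef, hq1]
      show Real.exp (1 / ((1/(m:ℝ))^2 + a)) ≤ Real.exp ((m:ℝ)^2)
      apply Real.exp_le_exp.mpr
      have hsq : (0:ℝ) < (1/(m:ℝ))^2 := by positivity
      have h1 : 1 / ((1/(m:ℝ))^2 + a) ≤ 1 / (1/(m:ℝ))^2 :=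
        one_div_le_one_div_of_le hsq (by linarith)
      have h2 : 1 / ((1:ℝ)/(m:ℝ))^2 = (m:ℝ)^2 := by
        rw [one_div, one_div, inv_pow, inv_inv]
      linarith [h1, h2.le, h2.ge]
    have hD : (m:ℝ) + 1 ≤ f (q 0) - f (q 1) := by
      rw [hfq0, hCdef]; linarith
    have hdiffpos : 1 < (f (q 0) - f (q 1)) * (q 1 - q 0) := by
      have h01 : q 1 - q 0 = 1/(m:ℝ) := by rw [hq0, hq1, sub_zero]
      rw [h01, mul_one_div, lt_div_iff₀ hmpos]
      linarith
    have hlb : 1 < |π.riemannSum f - ρ.riemannSum f| := by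
      rw [hsum]
      exact hdiffpos.trans_le (le_abs_self _)
    rw [Nat.cast_one] at hcontra
    simp only [hfdef] at hlb
    linarith
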